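/- arXiv:2605.26507 — 2 statements merged into one kernel-verified Lean document; each statement's English description precedes it below -/
import Mathlib

section
/- Under common censoring, the lower-priority IPCW kernel of Cui et al. is unbiased: for q ≥ 2, E[ (∏_{k<q} 1{T_{ki} > τ, Cᵢ > τ, T_{kj} > τ, Cⱼ > τ}) · 1{T_{qi} > T_{qj}, T_{qj} ≤ τ} / (G₁(τ)·G₀(τ)) ] = P( T_{ki} > τ and T_{kj} > τ for all k < q, and T_{qi} > T_{qj}, T_{qj} ≤ τ ). -/
open MeasureTheory ProbabilityTheory

lemma aux_indep_prod {Ω E : Type*} [MeasurableSpace Ω] [MeasurableSpace E]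
    (μ : Measure Ω) [IsProbabilityMeasure μ]
    (X Y : Ω → E) (C D : Ω → ℝ)
    (hX : Measurable X) (hY : Measurable Y) (hC : Measurable C) (hD : Measurable D)
    (hi : IndepFun X C μ) (hj : IndepFun Y D μ)
    (hp : IndepFun (fun ω => (X ω, C ω)) (fun ω => (Y ω, D ω)) μ)
    {S : Set (E × E)} (hS : MeasurableSet S) (τ : ℝ) :
    μ ((fun ω => (X ω, Y ω)) ⁻¹' S ∩ C ⁻¹' Set.Ioi τ ∩ D ⁻¹' Set.Ioi τ)
      = μ ((fun ω => (X ω, Y ω)) ⁻¹' S) * μ (C ⁻¹' Set.Ioi τ) * μ (D ⁻¹' Set.Ioi τ) := by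
  have hXY : IndepFun X Y μ := hp.comp measurable_fst measurable_fst
  have hPX : IsProbabilityMeasure (μ.map X) := Measure.isProbabilityMeasure_map hX.aemeasurable
  have hPY : IsProbabilityMeasure (μ.map Y) := Measure.isProbabilityMeasure_map hY.aemeasurable
  have hPC : IsProbabilityMeasure (μ.map C) := Measure.isProbabilityMeasure_map hC.aemeasurable
  have hPD : IsProbabilityMeasure (μ.map D) := Measure.isProbabilityMeasure_map hD.aemeasurable
  have hi' : μ.map (fun ω => (X ω, C ω)) = (μ.map X).prod (μ.map C) :=
    (indepFun_iff_map_prod_eq_prod_map_map hX.aemeasurable hC.aemeasurable).mp hi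
  have hj' : μ.map (fun ω => (Y ω, D ω)) = (μ.map Y).prod (μ.map D) :=
    (indepFun_iff_map_prod_eq_prod_map_map hY.aemeasurable hD.aemeasurable).mp hj
  have hp' : μ.map (fun ω => ((X ω, C ω), (Y ω, D ω)))
      = ((μ.map X).prod (μ.map C)).prod ((μ.map Y).prod (μ.map D)) := by
    rw [(indepFun_iff_map_prod_eq_prod_map_map (hX.prodMk hC).aemeasurable
      (hY.prodMk hD).aemeasurable).mp hp, hi', hj']
  have hXY' : μ.map (fun ω => (X ω, Y ω)) = (μ.map X).prod (μ.map Y) :=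
    (indepFun_iff_map_prod_eq_prod_map_map hX.aemeasurable hY.aemeasurable).mp hXY
  set T : Set ((E × ℝ) × (E × ℝ)) :=
    {p | (p.1.1, p.2.1) ∈ S ∧ τ < p.1.2 ∧ τ < p.2.2} with hTdef
  have hT : MeasurableSet T := by
    apply MeasurableSet.inter
    · exact hS.preimage ((measurable_fst.comp measurable_fst).prodMk
        (measurable_fst.comp measurable_snd))
    · exact ((measurableSet_Ioi.preimage (measurable_snd.comp measurable_fst)).inter
        (measurableSet_Ioi.preimage (measurable_snd.comp measurable_snd)))
  have hpre : (fun ω => (X ω, Y ω)) ⁻¹' S ∩ C ⁻¹' Set.Ioi τ ∩ D ⁻¹' Set.Ioi τ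
      = (fun ω => ((X ω, C ω), (Y ω, D ω))) ⁻¹' T := by
    ext ω
    simp only [T, Set.mem_inter_iff, Set.mem_preimage, Set.mem_Ioi, Set.mem_setOf_eq]
    tauto
  rw [hpre, ← Measure.map_apply ((hX.prodMk hC).prodMk (hY.prodMk hD)) hT, hp',
    ← Measure.map_apply (hX.prodMk hY) hS, hXY',
    ← Measure.map_apply hC measurableSet_Ioi, ← Measure.map_apply hD measurableSet_Ioi]
  have hf : Measurable fun x : E => (μ.map Y) (Prod.mk x ⁻¹' S) :=
    measurable_measure_prodMk_left hS
  rw [Measure.prod_apply hT, Measure.prod_apply hS]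
  have hslice : ∀ a : E × ℝ, ((μ.map Y).prod (μ.map D)) (Prod.mk a ⁻¹' T)
      = (μ.map Y) (Prod.mk a.1 ⁻¹' S)
        * (Set.Ioi τ).indicator (fun _ => (μ.map D) (Set.Ioi τ)) a.2 := by
    intro a
    by_cases h : τ < a.2
    · have he : Prod.mk a ⁻¹' T = (Prod.mk a.1 ⁻¹' S) ×ˢ Set.Ioi τ := by
        ext b
        simp [T, h]
      rw [he, Measure.prod_prod]
      simp [h]
    · have he : Prod.mk a ⁻¹' T = ∅ := by
        ext b
        simp [T, h]
      simp [he, h]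
  rw [lintegral_congr hslice,
    lintegral_prod_mul hf.aemeasurable
      ((measurable_const.indicator measurableSet_Ioi).aemeasurable),
    lintegral_indicator measurableSet_Ioi]
  simp only [lintegral_const, Measure.restrict_apply MeasurableSet.univ, Set.univ_inter]
  ring

/-- Under common censoring, the lower-priority IPCW kernel of
Cui et al. is unbiased: for a priority level `q ≥ 2` (here `1 ≤ q` in 0-based
indexing), the expectation of the kernel requiring every higher-priority
component to be observed event-free through `τ` for both subjects, divided by
`G₁(τ)·G₀(τ)`, equals the latent probability
`P(T_{ki} > τ and T_{kj} > τ for all k < q, T_{qi} > T_{qj}, T_{qj} ≤ τ)`. -/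
theorem ipcw_lower_priority_unbiased
    {Ω : Type*} [MeasurableSpace Ω] (μ : Measure Ω) [IsProbabilityMeasure μ]
    (Q : ℕ) (Ti Tj : Ω → Fin Q → ℝ) (Ci Cj : Ω → ℝ)
    (hTi : Measurable Ti) (hTj : Measurable Tj)
    (hCi : Measurable Ci) (hCj : Measurable Cj)
    (hposTi : ∀ ω k, 0 < Ti ω k) (hposTj : ∀ ω k, 0 < Tj ω k)
    (hposCi : ∀ ω, 0 < Ci ω) (hposCj : ∀ ω, 0 < Cj ω)
    (hindep_i : IndepFun Ti Ci μ) (hindep_j : IndepFun Tj Cj μ)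
    (hindep_pairs :
      IndepFun (fun ω => (Ti ω, Ci ω)) (fun ω => (Tj ω, Cj ω)) μ)
    (q : Fin Q) (hq : 1 ≤ (q : ℕ))
    (τ : ℝ) (hτ : 0 < τ)
    (hG1 : 0 < (μ {ω | τ < Ci ω}).toReal)
    (hG0 : 0 < (μ {ω | τ < Cj ω}).toReal) :
    ∫ ω,
        (if (∀ k < q, τ < Ti ω k ∧ τ < Ci ω ∧ τ < Tj ω k ∧ τ < Cj ω) ∧
            Tj ω q < Ti ω q ∧ Tj ω q ≤ τ then (1:ℝ) else 0) /
          ((μ {ω' | τ < Ci ω'}).toReal * (μ {ω' | τ < Cj ω'}).toReal)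
        ∂μ
      = (μ {ω | (∀ k < q, τ < Ti ω k ∧ τ < Tj ω k) ∧
            Tj ω q < Ti ω q ∧ Tj ω q ≤ τ}).toReal := by
  set S : Set ((Fin Q → ℝ) × (Fin Q → ℝ)) :=
    {p | (∀ k < q, τ < p.1 k ∧ τ < p.2 k) ∧ p.2 q < p.1 q ∧ p.2 q ≤ τ} with hSdef
  have hS : MeasurableSet S := by
    have h1 : MeasurableSet {p : (Fin Q → ℝ) × (Fin Q → ℝ) | ∀ k < q, τ < p.1 k ∧ τ < p.2 k} := by
      have : {p : (Fin Q → ℝ) × (Fin Q → ℝ) | ∀ k < q, τ < p.1 k ∧ τ < p.2 k}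
          = ⋂ k, ⋂ (_ : k < q), ({p : (Fin Q → ℝ) × (Fin Q → ℝ) | τ < p.1 k}
              ∩ {p | τ < p.2 k}) := by
        ext p; simp [Set.mem_iInter, forall_and]
      rw [this]
      exact MeasurableSet.iInter fun k => MeasurableSet.iInter fun _ =>
        (measurableSet_Ioi.preimage ((measurable_pi_apply k).comp measurable_fst)).inter
          (measurableSet_Ioi.preimage ((measurable_pi_apply k).comp measurable_snd))
    have h2 : MeasurableSet {p : (Fin Q → ℝ) × (Fin Q → ℝ) | p.2 q < p.1 q} :=
      measurableSet_lt (measurable_snd.eval) (measurable_fst.eval)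
    have h3 : MeasurableSet {p : (Fin Q → ℝ) × (Fin Q → ℝ) | p.2 q ≤ τ} :=
      measurableSet_Iic.preimage ((measurable_pi_apply q).comp measurable_snd)
    exact h1.inter (h2.inter h3)
  have hAeq : {ω | (∀ k < q, τ < Ti ω k ∧ τ < Ci ω ∧ τ < Tj ω k ∧ τ < Cj ω) ∧
        Tj ω q < Ti ω q ∧ Tj ω q ≤ τ}
      = (fun ω => (Ti ω, Tj ω)) ⁻¹' S ∩ Ci ⁻¹' Set.Ioi τ ∩ Cj ⁻¹' Set.Ioi τ := by
    ext ω
    simp only [S, Set.mem_setOf_eq, Set.mem_inter_iff, Set.mem_preimage, Set.mem_Ioi]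
    constructor
    · rintro ⟨h1, h2⟩
      have hk0 : (⟨0, q.pos⟩ : Fin Q) < q := by rw [Fin.lt_def]; exact hq
      obtain ⟨-, hci, -, hcj⟩ := h1 _ hk0
      exact ⟨⟨⟨fun k hk => ⟨(h1 k hk).1, (h1 k hk).2.2.1⟩, h2⟩, hci⟩, hcj⟩
    · rintro ⟨⟨⟨h1, h2⟩, hci⟩, hcj⟩
      exact ⟨fun k hk => ⟨(h1 k hk).1, hci, (h1 k hk).2, hcj⟩, h2⟩
  have hApre : MeasurableSet ((fun ω => (Ti ω, Tj ω)) ⁻¹' S ∩ Ci ⁻¹' Set.Ioi τ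
      ∩ Cj ⁻¹' Set.Ioi τ) :=
    ((hS.preimage (hTi.prodMk hTj)).inter (measurableSet_Ioi.preimage hCi)).inter
      (measurableSet_Ioi.preimage hCj)
  have hAmeas : MeasurableSet {ω | (∀ k < q, τ < Ti ω k ∧ τ < Ci ω ∧ τ < Tj ω k ∧ τ < Cj ω) ∧
        Tj ω q < Ti ω q ∧ Tj ω q ≤ τ} := hAeq ▸ hApre
  have hBset : {ω | (∀ k < q, τ < Ti ω k ∧ τ < Tj ω k) ∧ Tj ω q < Ti ω q ∧ Tj ω q ≤ τ}
      = (fun ω => (Ti ω, Tj ω)) ⁻¹' S := rfl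
  have hCiset : {ω | τ < Ci ω} = Ci ⁻¹' Set.Ioi τ := rfl
  have hCjset : {ω | τ < Cj ω} = Cj ⁻¹' Set.Ioi τ := rfl
  have hkey := aux_indep_prod μ Ti Tj Ci Cj hTi hTj hCi hCj hindep_i hindep_j
    hindep_pairs hS τ
  have hint : ∫ ω, (if (∀ k < q, τ < Ti ω k ∧ τ < Ci ω ∧ τ < Tj ω k ∧ τ < Cj ω) ∧
        Tj ω q < Ti ω q ∧ Tj ω q ≤ τ then (1:ℝ) else 0) ∂μ
      = (μ {ω | (∀ k < q, τ < Ti ω k ∧ τ < Ci ω ∧ τ < Tj ω k ∧ τ < Cj ω) ∧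
        Tj ω q < Ti ω q ∧ Tj ω q ≤ τ}).toReal := by
    rw [← measureReal_def, ← integral_indicator_one hAmeas]
    congr 1
    ext ω
    simp [Set.indicator_apply]
  rw [integral_div, hint, hAeq, hkey, hBset, hCiset, hCjset, ENNReal.toReal_mul,
    ENNReal.toReal_mul]
  rw [hCiset] at hG1
  rw [hCjset] at hG0
  field_simp
end

section
/- The key identification integral for the conditional tie-weighting estimator holds: if S₁(t) is continuous and differentiable in t with H₀(t) = −∂/∂t P(T₁ⱼ > τ, T_{qj} > t) the control-subject prefix subdensity, then ∫₀^τ S_treated(τ,t)·H_control(τ,t) dt = P(T₁ᵢ > τ, T₁ⱼ > τ, T_{qi} > T_{qj}, T_{qj} ≤ τ) for independent treated and control subjects. -/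
open MeasureTheory ProbabilityTheory Filter Topology

/-- Auxiliary: identification of the prefix probability as an integral of the
subdensity `H`. -/
lemma tie_g_eq {Ω : Type*} [MeasurableSpace Ω] (μ : Measure Ω) [IsProbabilityMeasure μ]
    (T1j Tqj : Ω → ℝ) (hT1j : Measurable T1j) (hTqj : Measurable Tqj)
    (hposqj : ∀ ω, 0 < Tqj ω)
    (τ : ℝ) (hτ : 0 < τ) (H : ℝ → ℝ)
    (hH : ∀ t : ℝ,
      HasDerivAt (fun s => (μ {ω | τ < T1j ω ∧ s < Tqj ω}).toReal) (-(H t)) t)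
    (hHcont : Continuous H) (b : ℝ) :
    (μ {ω | τ < T1j ω ∧ Tqj ω < b ∧ Tqj ω ≤ τ}).toReal
      = ∫ t in (0:ℝ)..τ, (if t < b then H t else 0) := by
  set G : ℝ → ℝ := fun s => (μ {ω | τ < T1j ω ∧ s < Tqj ω}).toReal with hGdef
  have hGcont : Continuous G :=
    continuous_iff_continuousAt.2 fun s => (hH s).continuousAt
  have hmeasA : ∀ s : ℝ, MeasurableSet {ω | τ < T1j ω ∧ s < Tqj ω} := fun s =>
    (measurableSet_lt measurable_const hT1j).inter (measurableSet_lt measurable_const hTqj)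
  have ftc : ∀ a c : ℝ, ∫ t in a..c, H t = G a - G c := by
    intro a c
    have h1 : ∫ t in a..c, -(H t) = G c - G a :=
      intervalIntegral.integral_eq_sub_of_hasDerivAt (fun t _ => hH t)
        ((hHcont.neg).intervalIntegrable a c)
    rw [intervalIntegral.integral_neg] at h1
    linarith
  -- measure with ≤ threshold equals G
  have hle : ∀ s : ℝ, (μ {ω | τ < T1j ω ∧ s ≤ Tqj ω}).toReal = G s := by
    intro s
    set A : ℕ → Set Ω := fun n => {ω | τ < T1j ω ∧ s - 1 / (n + 1) < Tqj ω} with hAdef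
    have hInter : {ω | τ < T1j ω ∧ s ≤ Tqj ω} = ⋂ n, A n := by
      ext ω
      simp only [Set.mem_iInter, Set.mem_setOf_eq, hAdef]
      constructor
      · rintro ⟨h1, h2⟩ n
        have : (0:ℝ) < 1 / (n + 1) := by positivity
        exact ⟨h1, by linarith⟩
      · intro h
        refine ⟨(h 0).1, ?_⟩
        by_contra hlt
        push_neg at hlt
        obtain ⟨n, hn⟩ := exists_nat_one_div_lt (show (0:ℝ) < s - Tqj ω by linarith)
        have := (h n).2
        push_cast at hn this
        linarith
    have hAnti : Antitone A := by
      intro m n hmn ω hω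
      have h1 : (1:ℝ) / (n + 1) ≤ 1 / (m + 1) := by
        apply one_div_le_one_div_of_le (by positivity)
        exact_mod_cast by omega
      have h2 : s - 1 / ((n:ℝ) + 1) < Tqj ω := hω.2
      exact ⟨hω.1, show s - 1 / ((m:ℝ) + 1) < Tqj ω by linarith⟩
    have htend : Tendsto (μ ∘ A) atTop (𝓝 (μ (⋂ n, A n))) :=
      tendsto_measure_iInter_atTop
        (fun n => ((measurableSet_lt measurable_const hT1j).inter
          (measurableSet_lt measurable_const hTqj)).nullMeasurableSet)
        hAnti ⟨0, measure_ne_top μ _⟩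
    have htendR : Tendsto (fun n => (μ (A n)).toReal) atTop
        (𝓝 ((μ (⋂ n, A n)).toReal)) :=
      (ENNReal.tendsto_toReal (measure_ne_top μ _)).comp htend
    have hseq : Tendsto (fun n : ℕ => s - 1 / ((n:ℝ) + 1)) atTop (𝓝 s) := by
      have h0 : Tendsto (fun n : ℕ => 1 / ((n:ℝ) + 1)) atTop (𝓝 0) :=
        tendsto_one_div_add_atTop_nhds_zero_nat
      simpa using (tendsto_const_nhds (x := s)).sub h0
    have htendG : Tendsto (fun n => (μ (A n)).toReal) atTop (𝓝 (G s)) := by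
      have := (hGcont.tendsto s).comp hseq
      exact this
    rw [hInter]
    exact tendsto_nhds_unique htendR htendG
  -- split lemma : measure of {τ < T1j ∧ Tqj < b} via G
  have hG0 : (μ {ω | τ < T1j ω}).toReal = G 0 := by
    have : {ω | τ < T1j ω ∧ (0:ℝ) < Tqj ω} = {ω | τ < T1j ω} := by
      ext ω; simp [hposqj ω]
    rw [hGdef]; simp only []; rw [this]
  have hsplit : ∀ c : ℝ, (μ {ω | τ < T1j ω ∧ Tqj ω < c}).toReal = G 0 - G c := by
    intro c
    have hU : {ω | τ < T1j ω} =
        {ω | τ < T1j ω ∧ Tqj ω < c} ∪ {ω | τ < T1j ω ∧ c ≤ Tqj ω} := by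
      ext ω
      by_cases h : Tqj ω < c <;> simp [h, le_of_not_gt, not_lt.mp] <;> tauto
    have hdisj : Disjoint {ω | τ < T1j ω ∧ Tqj ω < c} {ω | τ < T1j ω ∧ c ≤ Tqj ω} := by
      rw [Set.disjoint_left]
      rintro ω ⟨_, h1⟩ ⟨_, h2⟩
      exact absurd h2 (not_le.mpr h1)
    have hm2 : MeasurableSet {ω | τ < T1j ω ∧ c ≤ Tqj ω} :=
      (measurableSet_lt measurable_const hT1j).inter (measurableSet_le measurable_const hTqj)
    have hadd : μ {ω | τ < T1j ω}
        = μ {ω | τ < T1j ω ∧ Tqj ω < c} + μ {ω | τ < T1j ω ∧ c ≤ Tqj ω} := by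
      rw [hU]; exact measure_union hdisj hm2
    have := congrArg ENNReal.toReal hadd
    rw [ENNReal.toReal_add (measure_ne_top μ _) (measure_ne_top μ _)] at this
    rw [hG0, hle c] at this
    linarith
  -- now the three cases on b
  by_cases hb0 : b ≤ 0
  · have hempty : {ω | τ < T1j ω ∧ Tqj ω < b ∧ Tqj ω ≤ τ} = ∅ := by
      ext ω
      simp only [Set.mem_setOf_eq, Set.mem_empty_iff_false, iff_false]
      rintro ⟨_, h1, _⟩
      exact absurd (lt_of_lt_of_le h1 hb0) (not_lt.mpr (hposqj ω).le)
    rw [hempty]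
    have : ∀ t ∈ Set.uIcc (0:ℝ) τ, (if t < b then H t else 0) = (0:ℝ) := by
      intro t ht
      rw [Set.uIcc_of_le hτ.le] at ht
      have : ¬ t < b := not_lt.mpr (le_trans hb0 ht.1)
      simp [this]
    rw [intervalIntegral.integral_congr this]
    simp
  · push_neg at hb0
    by_cases hbτ : b ≤ τ
    · -- event = {τ < T1j ∧ Tqj < b}
      have hev : {ω | τ < T1j ω ∧ Tqj ω < b ∧ Tqj ω ≤ τ} = {ω | τ < T1j ω ∧ Tqj ω < b} := by
        ext ω
        simp only [Set.mem_setOf_eq]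
        constructor
        · rintro ⟨h1, h2, _⟩; exact ⟨h1, h2⟩
        · rintro ⟨h1, h2⟩; exact ⟨h1, h2, le_trans h2.le hbτ⟩
      rw [hev, hsplit b]
      have hbmem : b ∈ Set.Icc (0:ℝ) τ := ⟨hb0.le, hbτ⟩
      have hbae : ∀ᵐ t : ℝ, t ≠ b := by
        rw [ae_iff]
        simpa using Real.volume_singleton (x := b)
      have hae : ∀ᵐ t : ℝ, t ∈ Set.uIoc (0:ℝ) τ →
          (if t < b then H t else 0) = Set.indicator {x | x ≤ b} H t := by
        filter_upwards [hbae] with t htb _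
        by_cases h : t < b
        · simp [Set.indicator_apply, h, h.le]
        · have h2 : ¬ t ≤ b := fun hle => h (lt_of_le_of_ne hle htb)
          simp [Set.indicator_apply, h, h2]
      rw [intervalIntegral.integral_congr_ae hae,
        intervalIntegral.integral_indicator hbmem, ftc 0 b]
    · push_neg at hbτ
      have hev : {ω | τ < T1j ω ∧ Tqj ω < b ∧ Tqj ω ≤ τ} = {ω | τ < T1j ω ∧ Tqj ω ≤ τ} := by
        ext ω
        simp only [Set.mem_setOf_eq]
        constructor
        · rintro ⟨h1, _, h3⟩; exact ⟨h1, h3⟩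
        · rintro ⟨h1, h3⟩; exact ⟨h1, lt_of_le_of_lt h3 hbτ, h3⟩
      have hτval : (μ {ω | τ < T1j ω ∧ Tqj ω ≤ τ}).toReal = G 0 - G τ := by
        have hU : {ω | τ < T1j ω} =
            {ω | τ < T1j ω ∧ Tqj ω ≤ τ} ∪ {ω | τ < T1j ω ∧ τ < Tqj ω} := by
          ext ω
          by_cases h : Tqj ω ≤ τ <;> simp [h, not_le.mp] <;> tauto
        have hdisj : Disjoint {ω | τ < T1j ω ∧ Tqj ω ≤ τ} {ω | τ < T1j ω ∧ τ < Tqj ω} := by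
          rw [Set.disjoint_left]
          rintro ω ⟨_, h1⟩ ⟨_, h2⟩
          exact absurd h2 (not_lt.mpr h1)
        have hadd : μ {ω | τ < T1j ω}
            = μ {ω | τ < T1j ω ∧ Tqj ω ≤ τ} + μ {ω | τ < T1j ω ∧ τ < Tqj ω} := by
          rw [hU]; exact measure_union hdisj (hmeasA τ)
        have := congrArg ENNReal.toReal hadd
        rw [ENNReal.toReal_add (measure_ne_top μ _) (measure_ne_top μ _)] at this
        rw [hG0] at this
        have hGτ : (μ {ω | τ < T1j ω ∧ τ < Tqj ω}).toReal = G τ := rfl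
        linarith [hGτ]
      rw [hev, hτval]
      have : ∀ t ∈ Set.uIcc (0:ℝ) τ, (if t < b then H t else 0) = H t := by
        intro t ht
        rw [Set.uIcc_of_le hτ.le] at ht
        have : t < b := lt_of_le_of_lt ht.2 hbτ
        simp [this]
      rw [intervalIntegral.integral_congr this, ftc 0 τ]

/-- Key identification integral for the conditional tie-weighting
estimator: with `S_treated(τ,t) = P(T₁ᵢ > τ, T_{qi} > t)` and the control-subject
prefix subdensity `H_control(τ,t) = −∂/∂t P(T₁ⱼ > τ, T_{qj} > t)`,
`∫₀^τ S_treated(τ,t)·H_control(τ,t) dt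
  = P(T₁ᵢ > τ, T₁ⱼ > τ, T_{qi} > T_{qj}, T_{qj} ≤ τ)`
for independent treated and control subjects. -/
theorem conditional_tie_identification_integral
    {Ω : Type*} [MeasurableSpace Ω] (μ : Measure Ω) [IsProbabilityMeasure μ]
    (T1i Tqi T1j Tqj : Ω → ℝ)
    (hT1i : Measurable T1i) (hTqi : Measurable Tqi)
    (hT1j : Measurable T1j) (hTqj : Measurable Tqj)
    (hpos1i : ∀ ω, 0 < T1i ω) (hposqi : ∀ ω, 0 < Tqi ω)
    (hpos1j : ∀ ω, 0 < T1j ω) (hposqj : ∀ ω, 0 < Tqj ω)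
    (hindep :
      IndepFun (fun ω => (T1i ω, Tqi ω)) (fun ω => (T1j ω, Tqj ω)) μ)
    (τ : ℝ) (hτ : 0 < τ)
    (H : ℝ → ℝ)
    (hH : ∀ t : ℝ,
      HasDerivAt (fun s => (μ {ω | τ < T1j ω ∧ s < Tqj ω}).toReal) (-(H t)) t)
    (hHcont : Continuous H) :
    ∫ t in (0:ℝ)..τ, (μ {ω | τ < T1i ω ∧ t < Tqi ω}).toReal * H t
      = (μ {ω | τ < T1i ω ∧ τ < T1j ω ∧ Tqj ω < Tqi ω ∧ Tqj ω ≤ τ}).toReal := by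
  classical
  set X : Ω → ℝ × ℝ := fun ω => (T1i ω, Tqi ω) with hXdef
  set Y : Ω → ℝ × ℝ := fun ω => (T1j ω, Tqj ω) with hYdef
  have hX : Measurable X := hT1i.prodMk hTqi
  have hY : Measurable Y := hT1j.prodMk hTqj
  set νY : Measure (ℝ × ℝ) := Measure.map Y μ with hνYdef
  have hνYprob : IsProbabilityMeasure νY := Measure.isProbabilityMeasure_map hY.aemeasurable
  have hνXprob : IsProbabilityMeasure (Measure.map X μ) :=
    Measure.isProbabilityMeasure_map hX.aemeasurable
  have hmap : Measure.map (fun ω => (X ω, Y ω)) μ = (Measure.map X μ).prod νY :=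
    (indepFun_iff_map_prod_eq_prod_map_map hX.aemeasurable hY.aemeasurable).mp hindep
  set S : Set ((ℝ × ℝ) × ℝ × ℝ) :=
    {p | τ < p.1.1 ∧ τ < p.2.1 ∧ p.2.2 < p.1.2 ∧ p.2.2 ≤ τ} with hSdef
  have hS : MeasurableSet S := by
    apply MeasurableSet.inter
    · exact measurableSet_lt measurable_const (measurable_fst.comp measurable_fst)
    apply MeasurableSet.inter
    · exact measurableSet_lt measurable_const (measurable_fst.comp measurable_snd)
    apply MeasurableSet.inter
    · exact measurableSet_lt (measurable_snd.comp measurable_snd)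
        (measurable_snd.comp measurable_fst)
    · exact measurableSet_le (measurable_snd.comp measurable_snd) measurable_const
  -- rewrite RHS measure as a lintegral over μ
  have hpre : {ω | τ < T1i ω ∧ τ < T1j ω ∧ Tqj ω < Tqi ω ∧ Tqj ω ≤ τ}
      = (fun ω => (X ω, Y ω)) ⁻¹' S := rfl
  have hmeasRHS : μ {ω | τ < T1i ω ∧ τ < T1j ω ∧ Tqj ω < Tqi ω ∧ Tqj ω ≤ τ}
      = ∫⁻ ω, νY (Prod.mk (X ω) ⁻¹' S) ∂μ := by
    rw [hpre, ← Measure.map_apply (hX.prodMk hY) hS, hmap, Measure.prod_apply hS,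
      lintegral_map (measurable_measure_prodMk_left hS) hX]
  -- the slice measure
  have hslice : ∀ ω, νY (Prod.mk (X ω) ⁻¹' S)
      = if τ < T1i ω then μ {ω' | τ < T1j ω' ∧ Tqj ω' < Tqi ω ∧ Tqj ω' ≤ τ} else 0 := by
    intro ω
    by_cases h : τ < T1i ω
    · have hset : Prod.mk (X ω) ⁻¹' S
          = {q : ℝ × ℝ | τ < q.1 ∧ q.2 < Tqi ω ∧ q.2 ≤ τ} := by
        ext q
        simp only [Set.mem_preimage, hSdef, Set.mem_setOf_eq]
        exact ⟨fun h' => h'.2, fun h' => ⟨h, h'⟩⟩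
      have hms : MeasurableSet {q : ℝ × ℝ | τ < q.1 ∧ q.2 < Tqi ω ∧ q.2 ≤ τ} :=
        (measurableSet_lt measurable_const measurable_fst).inter
          ((measurableSet_lt measurable_snd measurable_const).inter
            (measurableSet_le measurable_snd measurable_const))
      rw [hset, hνYdef, Measure.map_apply hY hms]
      simp only [h, if_true]
      rfl
    · have hset : Prod.mk (X ω) ⁻¹' S = (∅ : Set (ℝ × ℝ)) := by
        ext q
        simp only [Set.mem_preimage, hSdef, Set.mem_setOf_eq, Set.mem_empty_iff_false,
          iff_false]
        rintro ⟨h1, -⟩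
        exact h h1
      simp [hset, h]
  -- identify the inner measure via tie_g_eq
  have hgeq : ∀ b : ℝ, (μ {ω' | τ < T1j ω' ∧ Tqj ω' < b ∧ Tqj ω' ≤ τ}).toReal
      = ∫ t in (0:ℝ)..τ, (if t < b then H t else 0) :=
    tie_g_eq μ T1j Tqj hT1j hTqj hposqj τ hτ H hH hHcont
  have hmeasF : Measurable fun ω => νY (Prod.mk (X ω) ⁻¹' S) :=
    (measurable_measure_prodMk_left hS).comp hX
  have hlt : ∀ᵐ ω ∂μ, νY (Prod.mk (X ω) ⁻¹' S) < ⊤ :=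
    ae_of_all _ fun ω => lt_of_le_of_lt prob_le_one ENNReal.one_lt_top
  have hRHS : (μ {ω | τ < T1i ω ∧ τ < T1j ω ∧ Tqj ω < Tqi ω ∧ Tqj ω ≤ τ}).toReal
      = ∫ ω, (νY (Prod.mk (X ω) ⁻¹' S)).toReal ∂μ := by
    rw [hmeasRHS]
    exact (integral_toReal hmeasF.aemeasurable hlt).symm
  set ψ : Ω × ℝ → ℝ := fun p => if τ < T1i p.1 ∧ p.2 < Tqi p.1 then H p.2 else 0 with hψdef
  have hpt : ∀ ω, (νY (Prod.mk (X ω) ⁻¹' S)).toReal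
      = ∫ t in (0:ℝ)..τ, ψ (ω, t) := by
    intro ω
    rw [hslice ω]
    by_cases h : τ < T1i ω
    · simp only [h, if_true]
      rw [hgeq (Tqi ω)]
      refine intervalIntegral.integral_congr fun t _ => ?_
      simp only [hψdef, h, true_and]
    · simp only [h, if_false]
      have : ∀ t ∈ Set.uIcc (0:ℝ) τ, ψ (ω, t) = 0 := by
        intro t _
        simp only [hψdef, h, false_and, if_false]
      rw [intervalIntegral.integral_congr this]
      simp
  -- Fubini setup
  set ν : Measure ℝ := volume.restrict (Set.Ioc 0 τ) with hνdef
  have hνfin : IsFiniteMeasure ν :=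
    ⟨by rw [hνdef, Measure.restrict_apply_univ]; exact measure_Ioc_lt_top⟩
  have hψmeas : Measurable ψ := by
    have hA : MeasurableSet {p : Ω × ℝ | τ < T1i p.1 ∧ p.2 < Tqi p.1} :=
      (measurableSet_lt measurable_const (hT1i.comp measurable_fst)).inter
        (measurableSet_lt measurable_snd (hTqi.comp measurable_fst))
    have hrw : ψ = Set.indicator {p : Ω × ℝ | τ < T1i p.1 ∧ p.2 < Tqi p.1}
        (fun p => H p.2) := by
      ext p
      simp [hψdef, Set.indicator_apply]
    rw [hrw]
    exact (hHcont.measurable.comp measurable_snd).indicator hA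
  obtain ⟨C, hC⟩ :=
    (isCompact_Icc (a := (0:ℝ)) (b := τ)).exists_bound_of_continuousOn hHcont.continuousOn
  have hC0 : 0 ≤ C := le_trans (norm_nonneg _) (hC τ (Set.right_mem_Icc.mpr hτ.le))
  have hbound : ∀ᵐ p ∂(μ.prod ν), ‖ψ p‖ ≤ C := by
    have hsnd : ∀ᵐ p ∂(μ.prod ν), p.2 ∈ Set.Ioc 0 τ := by
      rw [ae_iff]
      have hrw : {p : Ω × ℝ | ¬ p.2 ∈ Set.Ioc 0 τ} = Set.univ ×ˢ (Set.Ioc (0:ℝ) τ)ᶜ := by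
        ext p; simp
      have h0 : ν ((Set.Ioc (0:ℝ) τ)ᶜ) = 0 := by
        rw [hνdef, Measure.restrict_apply measurableSet_Ioc.compl, Set.compl_inter_self]
        simp
      rw [hrw, Measure.prod_prod, h0, mul_zero]
    filter_upwards [hsnd] with p hp
    by_cases h : τ < T1i p.1 ∧ p.2 < Tqi p.1
    · simp only [hψdef, h, if_true]
      exact hC p.2 ⟨hp.1.le, hp.2⟩
    · simp only [hψdef, h, if_false]
      simpa using hC0
  have hint : Integrable (Function.uncurry fun ω t => ψ (ω, t)) (μ.prod ν) := by
    refine Integrable.mono' (integrable_const C) ?_ hbound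
    exact hψmeas.aestronglyMeasurable
  have hswap := integral_integral_swap hint
  rw [hRHS]
  symm
  calc ∫ ω, (νY (Prod.mk (X ω) ⁻¹' S)).toReal ∂μ
      = ∫ ω, ∫ t, ψ (ω, t) ∂ν ∂μ := by
        refine integral_congr_ae (ae_of_all _ fun ω => ?_)
        show (νY (Prod.mk (X ω) ⁻¹' S)).toReal = ∫ t, ψ (ω, t) ∂ν
        rw [hpt ω, intervalIntegral.integral_of_le hτ.le, hνdef]
    _ = ∫ t, ∫ ω, ψ (ω, t) ∂μ ∂ν := hswap
    _ = ∫ t, (μ {ω | τ < T1i ω ∧ t < Tqi ω}).toReal * H t ∂ν := by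
        refine integral_congr_ae (ae_of_all _ fun t => ?_)
        show (∫ ω, ψ (ω, t) ∂μ) = (μ {ω | τ < T1i ω ∧ t < Tqi ω}).toReal * H t
        have hms : MeasurableSet {ω | τ < T1i ω ∧ t < Tqi ω} :=
          (measurableSet_lt measurable_const hT1i).inter
            (measurableSet_lt measurable_const hTqi)
        have hrw : (fun ω => ψ (ω, t))
            = Set.indicator {ω | τ < T1i ω ∧ t < Tqi ω} (fun _ => H t) := by
          ext ω
          simp [hψdef, Set.indicator_apply]
        rw [hrw, integral_indicator_const _ hms, smul_eq_mul]; rfl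
    _ = ∫ t in (0:ℝ)..τ, (μ {ω | τ < T1i ω ∧ t < Tqi ω}).toReal * H t := by
        rw [intervalIntegral.integral_of_le hτ.le, hνdef]
end
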